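/- Let a ≠ 0, 0 < s ≤ 1, α² + a² = s², |β| ≤ 1/40, |γ| ≤ 1/40, and D the closed unit disc in ℝ². Define v'_±(x,y) = α + βy + γxy ± γ²(9/4 − y²/4). Then Q(v'₊) ≤ 0 and Q(v'₋) ≥ 0 on D, where Q(v) = ∂/∂x[(v² + y² + a²)^{−1/2} ∂v/∂x] + 2 ∂²v/∂y². -/

import Mathlib

/-- The divergence-form quasilinear operator
`Q(v) = ∂/∂x[(v² + y² + a²)^{-1/2} ∂v/∂x] + 2 ∂²v/∂y²`. -/
noncomputable def Qop (a : ℝ) (v : ℝ × ℝ → ℝ) (p : ℝ × ℝ) : ℝ :=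
  fderiv ℝ (fun q => ((v q) ^ 2 + q.2 ^ 2 + a ^ 2) ^ (-(1 : ℝ) / 2)
      * fderiv ℝ v q ((1 : ℝ), (0 : ℝ))) p ((1 : ℝ), (0 : ℝ))
  + 2 * fderiv ℝ (fun q => fderiv ℝ v q ((0 : ℝ), (1 : ℝ))) p ((0 : ℝ), (1 : ℝ))

lemma Qop_val (a α β γ ε : ℝ) (ha : a ≠ 0) (p : ℝ × ℝ) :
    Qop a (fun q => α + β * q.2 + γ * q.1 * q.2 + ε * (9 / 4 - q.2 ^ 2 / 4)) p
      = -((α + β * p.2 + γ * p.1 * p.2 + ε * (9 / 4 - p.2 ^ 2 / 4)) * (γ * p.2) ^ 2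
          * ((α + β * p.2 + γ * p.1 * p.2 + ε * (9 / 4 - p.2 ^ 2 / 4)) ^ 2 + p.2 ^ 2 + a ^ 2)
            ^ (-(3 : ℝ) / 2)) - ε := by
  set v : ℝ × ℝ → ℝ := fun q => α + β * q.2 + γ * q.1 * q.2 + ε * (9 / 4 - q.2 ^ 2 / 4) with hvdef
  have hw : ∀ q : ℝ × ℝ, 0 < v q * v q + q.2 * q.2 + a * a := by
    intro q
    have h1 := mul_self_nonneg (v q)
    have h2 := mul_self_nonneg q.2
    have h3 : 0 < a * a := mul_self_pos.mpr ha
    linarith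
  have hv : ∀ q : ℝ × ℝ, HasFDerivAt v
      ((β + γ * q.1 - ε * q.2 / 2) • ContinuousLinearMap.snd ℝ ℝ ℝ
        + (γ * q.2) • ContinuousLinearMap.fst ℝ ℝ ℝ) q := by
    intro q
    have h := (((hasFDerivAt_const α q).add ((hasFDerivAt_snd (𝕜 := ℝ)).const_mul β)).add
        (((hasFDerivAt_fst (𝕜 := ℝ)).const_mul γ).mul hasFDerivAt_snd)).add
        ((hasFDerivAt_const (ε * 9 / 4) q).sub
          (((hasFDerivAt_snd (𝕜 := ℝ) (p := q)).mul hasFDerivAt_snd).const_mul (ε / 4)))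
    refine (h.congr_of_eventuallyEq (Filter.Eventually.of_forall fun x => ?_)).congr_fderiv ?_
    · simp only [hvdef, Pi.add_apply, Pi.sub_apply, Pi.mul_apply]; ring
    · ext <;> simp <;> ring
  have hv1 : ∀ q : ℝ × ℝ, fderiv ℝ v q ((1:ℝ), (0:ℝ)) = γ * q.2 := by
    intro q; rw [(hv q).fderiv]; simp
  have hv2 : ∀ q : ℝ × ℝ, fderiv ℝ v q ((0:ℝ), (1:ℝ)) = β + γ * q.1 - ε / 2 * q.2 := by
    intro q; rw [(hv q).fderiv]; simp; ring
  have e1 : (fun q : ℝ × ℝ => (v q ^ 2 + q.2 ^ 2 + a ^ 2) ^ (-(1:ℝ)/2)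
        * fderiv ℝ v q ((1:ℝ), (0:ℝ)))
      = fun q : ℝ × ℝ => (v q * v q + q.2 * q.2 + a * a) ^ (-(1:ℝ)/2) * (γ * q.2) := by
    funext q; rw [hv1]; ring_nf
  have e2 : (fun q : ℝ × ℝ => fderiv ℝ v q ((0:ℝ), (1:ℝ)))
      = fun q : ℝ × ℝ => β + γ * q.1 - ε / 2 * q.2 := by
    funext q; rw [hv2]
  have hW := (((hv p).mul (hv p)).add
      ((hasFDerivAt_snd (𝕜 := ℝ) (p := p)).mul hasFDerivAt_snd)).add_const (a * a)
  have hH := hW.rpow_const (p := -(1:ℝ)/2) (Or.inl (hw p).ne')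
  have hG := hH.mul ((hasFDerivAt_snd (𝕜 := ℝ) (p := p)).const_mul γ)
  have hK := ((hasFDerivAt_fst (𝕜 := ℝ) (p := p)).const_mul γ |>.const_add β).sub
      ((hasFDerivAt_snd (𝕜 := ℝ) (p := p)).const_mul (ε / 2))
  simp only [Qop]
  rw [e1, e2, HasFDerivAt.fderiv (f := fun q : ℝ × ℝ => (v q * v q + q.2 * q.2 + a * a) ^ (-(1:ℝ)/2) * (γ * q.2)) hG,
    HasFDerivAt.fderiv (f := fun q : ℝ × ℝ => β + γ * q.1 - ε / 2 * q.2) hK]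
  simp only [ContinuousLinearMap.add_apply, ContinuousLinearMap.smul_apply,
    ContinuousLinearMap.coe_fst', ContinuousLinearMap.coe_snd', ContinuousLinearMap.sub_apply,
    smul_eq_mul, Pi.add_apply, Pi.mul_apply]
  have hexp : (-(1:ℝ)/2 - 1) = -(3:ℝ)/2 := by norm_num
  have hbase : v p * v p + p.2 * p.2 + a * a = v p ^ 2 + p.2 ^ 2 + a ^ 2 := by ring
  rw [hexp, hbase]
  ring

lemma key_bound (V Y A : ℝ) (hA : A ≠ 0) :
    |V * Y ^ 2 * (V ^ 2 + Y ^ 2 + A ^ 2) ^ (-(3:ℝ)/2)| ≤ 1 := by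
  set w : ℝ := V ^ 2 + Y ^ 2 + A ^ 2 with hwdef
  have hw : 0 < w := by positivity
  set u : ℝ := w ^ ((3:ℝ)/2) with hudef
  set t : ℝ := w ^ (-(3:ℝ)/2) with htdef
  have hu0 : 0 < u := Real.rpow_pos_of_pos hw _
  have ht0 : 0 < t := Real.rpow_pos_of_pos hw _
  have htu : t * u = 1 := by
    rw [htdef, hudef, show -(3:ℝ)/2 = -((3:ℝ)/2) by ring, Real.rpow_neg hw.le]
    exact inv_mul_cancel₀ hu0.ne'
  have hu : u = w ^ ((1:ℝ)/2) * w := by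
    rw [hudef, show (3:ℝ)/2 = 1/2 + 1 by norm_num, Real.rpow_add hw, Real.rpow_one]
  have habs : |V| ≤ w ^ ((1:ℝ)/2) := by
    rw [← Real.sqrt_eq_rpow]
    calc |V| = Real.sqrt (V ^ 2) := (Real.sqrt_sq_eq_abs V).symm
      _ ≤ Real.sqrt w := Real.sqrt_le_sqrt (by nlinarith [sq_nonneg Y, sq_nonneg A])
  have hY : Y ^ 2 ≤ w := by nlinarith [sq_nonneg V, sq_nonneg A]
  have h1 : |V| * Y ^ 2 ≤ u := by
    rw [hu]
    exact mul_le_mul habs hY (sq_nonneg _) (Real.rpow_nonneg hw.le _)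
  rw [abs_mul, abs_mul, abs_of_pos ht0, abs_of_nonneg (sq_nonneg Y)]
  calc |V| * Y ^ 2 * t ≤ u * t := mul_le_mul_of_nonneg_right h1 ht0.le
    _ = 1 := by rw [mul_comm]; exact htu

/-- Proposition 4.10: `v'₊` is a supersolution and `v'₋` a subsolution of `Q(v) = 0`
on the closed unit disc. -/
theorem stmt_8 (a s α β γ : ℝ) (ha : a ≠ 0) (hs0 : 0 < s) (hs1 : s ≤ 1)
    (hα : α ^ 2 + a ^ 2 = s ^ 2) (hβ : |β| ≤ 1 / 40) (hγ : |γ| ≤ 1 / 40) :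
    ∀ p : ℝ × ℝ, p.1 ^ 2 + p.2 ^ 2 ≤ 1 →
      Qop a (fun q => α + β * q.2 + γ * q.1 * q.2
          + γ ^ 2 * (9 / 4 - q.2 ^ 2 / 4)) p ≤ 0 ∧
      0 ≤ Qop a (fun q => α + β * q.2 + γ * q.1 * q.2
          - γ ^ 2 * (9 / 4 - q.2 ^ 2 / 4)) p := by

  intro p _
  constructor
  · rw [Qop_val a α β γ (γ ^ 2) ha p]
    set V := α + β * p.2 + γ * p.1 * p.2 + γ ^ 2 * (9 / 4 - p.2 ^ 2 / 4) with hV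
    have hk := (abs_le.mp (key_bound V p.2 a ha)).1
    set t := (V ^ 2 + p.2 ^ 2 + a ^ 2) ^ (-(3:ℝ)/2)
    nlinarith [mul_nonneg (sq_nonneg γ) (by linarith : (0:ℝ) ≤ 1 + V * p.2 ^ 2 * t)]
  · have efun : (fun q : ℝ × ℝ => α + β * q.2 + γ * q.1 * q.2
        - γ ^ 2 * (9 / 4 - q.2 ^ 2 / 4))
      = fun q : ℝ × ℝ => α + β * q.2 + γ * q.1 * q.2
        + (-(γ ^ 2)) * (9 / 4 - q.2 ^ 2 / 4) := by funext q; ring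
    rw [efun, Qop_val a α β γ (-(γ ^ 2)) ha p]
    set V := α + β * p.2 + γ * p.1 * p.2 + (-(γ ^ 2)) * (9 / 4 - p.2 ^ 2 / 4) with hV
    have hk := (abs_le.mp (key_bound V p.2 a ha)).2
    set t := (V ^ 2 + p.2 ^ 2 + a ^ 2) ^ (-(3:ℝ)/2)
    nlinarith [mul_nonneg (sq_nonneg γ) (by linarith : (0:ℝ) ≤ 1 - V * p.2 ^ 2 * t)]
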